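/- The function Q is differentiable on D, and for every x ∈ D, writing y := (α − p_A·x)/p_B and letting θ̂_A := μ_A − β_A + σ̂_A·Φ⁻¹(1−x) and θ̂_B := μ_B − β_B + σ̂_B·Φ⁻¹(1−y) (the selection thresholds for which the group selection rates equal x and y respectively), the derivative of Q satisfies Q′(x) = (p_A/α)·[ ((θ̂_A + β_A)·η_A² + μ_A·σ_A²)/(η_A² + σ_A²) − ((θ̂_B + β_B)·η_B² + μ_B·σ_B²)/(η_B² + σ_B²) ]. -/

import Mathlib

noncomputable def gpdf (t : ℝ) : ℝ := Real.exp (-t ^ 2 / 2) / Real.sqrt (2 * Real.pi)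

noncomputable def gcdf (x : ℝ) : ℝ := ∫ t in Set.Iic x, gpdf t

noncomputable def gquant : ℝ → ℝ := Function.invFun gcdf

noncomputable def sHat (η σ : ℝ) : ℝ := Real.sqrt (η ^ 2 + σ ^ 2)

noncomputable def sTil (η σ : ℝ) : ℝ := η ^ 2 / sHat η σ

def Dset (pA α : ℝ) : Set ℝ :=
  {x | x ∈ Set.Ioo (0:ℝ) 1 ∧ (α - pA * x) / (1 - pA) ∈ Set.Ioo (0:ℝ) 1}

noncomputable def Qfun (pA α μA μB sA sB x : ℝ) : ℝ :=
  (1 / α) * (pA * (μA * x + sA * gpdf (gquant (1 - x)))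
    + (1 - pA) * (μB * ((α - pA * x) / (1 - pA))
      + sB * gpdf (gquant (1 - (α - pA * x) / (1 - pA)))))

noncomputable def clampTo (lo hi x : ℝ) : ℝ := min hi (max lo x)


open Set MeasureTheory Filter Real Topology intervalIntegral

lemma gpdf_pos (t : ℝ) : 0 < gpdf t := by
  unfold gpdf
  positivity

lemma gpdf_cont : Continuous gpdf := by
  unfold gpdf
  fun_prop

lemma gpdf_integrable : Integrable gpdf := by
  have : Integrable (fun t : ℝ => Real.exp (-(2⁻¹:ℝ) * t ^ 2)) := integrable_exp_neg_mul_sq (by norm_num)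
  have h := this.div_const (Real.sqrt (2 * Real.pi))
  refine h.congr ?_
  filter_upwards with t
  unfold gpdf
  ring_nf

lemma integral_gpdf : ∫ t, gpdf t = 1 := by
  unfold gpdf
  rw [MeasureTheory.integral_div]
  have : ∀ t : ℝ, Real.exp (-t ^ 2 / 2) = Real.exp (-(2⁻¹:ℝ) * t ^ 2) := by
    intro t; ring_nf
  simp_rw [this]
  rw [integral_gaussian]
  rw [div_eq_one_iff_eq (by positivity)]
  rw [show Real.pi / 2⁻¹ = 2 * Real.pi by ring]

lemma gcdf_hasDerivAt (x : ℝ) : HasDerivAt gcdf (gpdf x) x := by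
  have h : gcdf = fun u => gcdf 0 + ∫ t in (0:ℝ)..u, gpdf t := by
    funext u
    rw [← integral_Iic_sub_Iic (gpdf_integrable.integrableOn) (gpdf_integrable.integrableOn)]
    unfold gcdf; ring
  rw [h]
  exact ((gpdf_cont.integral_hasStrictDerivAt 0 x).hasDerivAt).const_add _

lemma gcdf_strictMono : StrictMono gcdf := by
  apply strictMono_of_deriv_pos
  intro x
  rw [(gcdf_hasDerivAt x).deriv]
  exact gpdf_pos x

lemma gcdf_mem (x : ℝ) : gcdf x ∈ Ioo (0:ℝ) 1 := by
  have hpos : ∀ s : Set ℝ, MeasurableSet s → volume s ≠ 0 → 0 < ∫ t in s, gpdf t := by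
    intro s hs h0
    rw [setIntegral_pos_iff_support_of_nonneg_ae
      (Filter.Eventually.of_forall fun t => (gpdf_pos t).le) gpdf_integrable.integrableOn]
    have : Function.support gpdf = univ := by
      ext t; simp [Function.mem_support, (gpdf_pos t).ne']
    rw [this, univ_inter]
    exact h0.bot_lt
  constructor
  · exact hpos _ measurableSet_Iic (by simp)
  · have := integral_Iic_add_Ioi (b := x) gpdf_integrable.integrableOn gpdf_integrable.integrableOn
    rw [integral_gpdf] at this
    have h2 : 0 < ∫ t in Ioi x, gpdf t := hpos _ measurableSet_Ioi (by simp)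
    unfold gcdf
    linarith

lemma gcdf_tendsto_atTop : Tendsto (fun n : ℕ => gcdf n) atTop (𝓝 1) := by
  have h := tendsto_setIntegral_of_monotone (μ := volume) (f := gpdf)
    (s := fun n : ℕ => Iic (n : ℝ)) (fun n => measurableSet_Iic)
    (fun n m h => Iic_subset_Iic.2 (by exact_mod_cast h)) (gpdf_integrable.integrableOn)
  have hu : (⋃ n : ℕ, Iic ((n : ℝ))) = univ := by
    ext x
    simp only [mem_iUnion, mem_Iic, mem_univ, iff_true]
    exact exists_nat_ge x
  rw [hu] at h
  rw [Measure.restrict_univ] at h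
  rwa [integral_gpdf] at h

lemma gcdf_tendsto_atBot : Tendsto (fun n : ℕ => gcdf (-n)) atTop (𝓝 0) := by
  have h := tendsto_setIntegral_of_antitone (μ := volume) (f := gpdf)
    (s := fun n : ℕ => Iic (-(n : ℝ))) (fun n => measurableSet_Iic)
    (fun n m hnm => Iic_subset_Iic.2 (by exact_mod_cast neg_le_neg (by exact_mod_cast hnm)))
    ⟨0, gpdf_integrable.integrableOn⟩
  have hu : (⋂ n : ℕ, Iic (-(n : ℝ))) = ∅ := by
    ext x
    simp only [mem_iInter, mem_Iic, mem_empty_iff_false, iff_false, not_forall, not_le]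
    obtain ⟨n, hn⟩ := exists_nat_gt (-x)
    exact ⟨n, by linarith⟩
  rw [hu] at h
  simpa [gcdf] using h

lemma gcdf_cont : Continuous gcdf :=
  continuous_iff_continuousAt.mpr fun x => (gcdf_hasDerivAt x).continuousAt

lemma gcdf_surj {p : ℝ} (hp : p ∈ Ioo (0:ℝ) 1) : ∃ t, gcdf t = p := by
  obtain ⟨n, hn1, hn2⟩ := ((gcdf_tendsto_atTop.eventually (eventually_gt_nhds hp.2)).and
    (gcdf_tendsto_atBot.eventually (eventually_lt_nhds hp.1))).exists
  have hab : (-(n:ℝ)) ≤ (n:ℝ) := by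
    have : (0:ℝ) ≤ n := Nat.cast_nonneg n
    linarith
  obtain ⟨t, _, ht⟩ := intermediate_value_Icc hab gcdf_cont.continuousOn ⟨hn2.le, hn1.le⟩
  exact ⟨t, ht⟩

lemma gquant_gcdf (t : ℝ) : gquant (gcdf t) = t :=
  Function.leftInverse_invFun gcdf_strictMono.injective t

lemma gcdf_gquant {p : ℝ} (hp : p ∈ Ioo (0:ℝ) 1) : gcdf (gquant p) = p :=
  Function.invFun_eq (gcdf_surj hp)

lemma gquant_continuousAt {p : ℝ} (hp : p ∈ Ioo (0:ℝ) 1) : ContinuousAt gquant p := by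
  obtain ⟨t, rfl⟩ := gcdf_surj hp
  rw [Metric.continuousAt_iff]
  intro ε hε
  refine ⟨min (gcdf t - gcdf (t - ε)) (gcdf (t + ε) - gcdf t), ?_, ?_⟩
  · apply lt_min <;> simp only [sub_pos] <;> apply gcdf_strictMono <;> linarith
  · intro y hy
    rw [Real.dist_eq, abs_lt] at hy
    have hy1 : gcdf (t - ε) < y := by
      have := hy.1
      have h2 := min_le_left (gcdf t - gcdf (t - ε)) (gcdf (t + ε) - gcdf t)
      linarith
    have hy2 : y < gcdf (t + ε) := by
      have := hy.2
      have h2 := min_le_right (gcdf t - gcdf (t - ε)) (gcdf (t + ε) - gcdf t)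
      linarith
    have hymem : y ∈ Ioo (0:ℝ) 1 :=
      ⟨(gcdf_mem (t - ε)).1.trans hy1, hy2.trans (gcdf_mem (t + ε)).2⟩
    obtain ⟨s, rfl⟩ := gcdf_surj hymem
    rw [gquant_gcdf, gquant_gcdf, Real.dist_eq, abs_lt]
    constructor
    · have := gcdf_strictMono.lt_iff_lt.mp hy1; linarith
    · have := gcdf_strictMono.lt_iff_lt.mp hy2; linarith

lemma gquant_hasDerivAt {p : ℝ} (hp : p ∈ Ioo (0:ℝ) 1) :
    HasDerivAt gquant (gpdf (gquant p))⁻¹ p := by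
  apply HasDerivAt.of_local_left_inverse (gquant_continuousAt hp)
    (gcdf_hasDerivAt (gquant p)) (gpdf_pos _).ne'
  filter_upwards [IsOpen.mem_nhds isOpen_Ioo hp] with y hy
  exact gcdf_gquant hy

lemma pdf_quant_hasDerivAt {p : ℝ} (hp : p ∈ Ioo (0:ℝ) 1) :
    HasDerivAt (fun y => gpdf (gquant y)) (-gquant p) p := by
  have h1 : HasDerivAt (fun t : ℝ => -t ^ 2 / 2) (-(gquant p)) (gquant p) := by
    have := ((hasDerivAt_pow 2 (gquant p)).neg).div_const 2
    refine this.congr_deriv ?_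
    ring
  have h2 : HasDerivAt gpdf (-(gquant p) * gpdf (gquant p)) (gquant p) := by
    have := (h1.exp).div_const (Real.sqrt (2 * Real.pi))
    refine this.congr_deriv ?_
    unfold gpdf
    ring
  have := h2.comp p (gquant_hasDerivAt hp)
  refine this.congr_deriv ?_
  rw [mul_assoc, mul_inv_cancel₀ (gpdf_pos _).ne', mul_one]

lemma bracket_eq (μ β q η σ : ℝ) (hη : 0 < η) (hσ : 0 < σ) :
    (((μ - β + sHat η σ * q) + β) * η ^ 2 + μ * σ ^ 2) / (η ^ 2 + σ ^ 2)
      = μ + sTil η σ * q := by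
  have h0 : (0:ℝ) < η ^ 2 + σ ^ 2 := by positivity
  have hs : sHat η σ ^ 2 = η ^ 2 + σ ^ 2 := Real.sq_sqrt h0.le
  have hs0 : (0:ℝ) < sHat η σ := Real.sqrt_pos.2 h0
  rw [sTil, div_eq_iff h0.ne']
  field_simp
  linear_combination q * η ^ 2 * hs

/-- differentiability of the utility `Q` on `D` and the explicit
expression of its derivative. -/
theorem stmt3 (pA α μA μB ηA ηB σA σB βA βB : ℝ)
    (hpA : pA ∈ Set.Ioo (0:ℝ) 1) (hα : α ∈ Set.Ioo (0:ℝ) 1)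
    (hηA : 0 < ηA) (hηB : 0 < ηB) (hσA : 0 < σA) (hσB : 0 < σB) :
    DifferentiableOn ℝ (Qfun pA α μA μB (sTil ηA σA) (sTil ηB σB)) (Dset pA α)
    ∧ ∀ x ∈ Dset pA α,
        HasDerivAt (Qfun pA α μA μB (sTil ηA σA) (sTil ηB σB))
          ((pA / α) *
            ((((μA - βA + sHat ηA σA * gquant (1 - x)) + βA) * ηA ^ 2 + μA * σA ^ 2)
                / (ηA ^ 2 + σA ^ 2)
              - (((μB - βB + sHat ηB σB * gquant (1 - (α - pA * x) / (1 - pA))) + βB) * ηB ^ 2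
                  + μB * σB ^ 2) / (ηB ^ 2 + σB ^ 2))) x := by
  have hpB : (0:ℝ) < 1 - pA := by linarith [hpA.2]
  have key : ∀ x ∈ Dset pA α,
      HasDerivAt (Qfun pA α μA μB (sTil ηA σA) (sTil ηB σB))
        ((pA / α) *
          ((((μA - βA + sHat ηA σA * gquant (1 - x)) + βA) * ηA ^ 2 + μA * σA ^ 2)
              / (ηA ^ 2 + σA ^ 2)
            - (((μB - βB + sHat ηB σB * gquant (1 - (α - pA * x) / (1 - pA))) + βB) * ηB ^ 2
                + μB * σB ^ 2) / (ηB ^ 2 + σB ^ 2))) x := by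
    intro x hx
    obtain ⟨hx1, hy1⟩ := hx
    set y : ℝ := (α - pA * x) / (1 - pA) with hy_def
    have hx2 : (1:ℝ) - x ∈ Set.Ioo (0:ℝ) 1 := ⟨by linarith [hx1.2], by linarith [hx1.1]⟩
    have hy2 : (1:ℝ) - y ∈ Set.Ioo (0:ℝ) 1 := ⟨by linarith [hy1.2], by linarith [hy1.1]⟩
    set qA := gquant (1 - x) with hqA
    set qB := gquant (1 - y) with hqB
    set sA := sTil ηA σA
    set sB := sTil ηB σB
    -- derivative of the A pdf term
    have h1 : HasDerivAt (fun u : ℝ => 1 - u) (-1) x := (hasDerivAt_id x).const_sub 1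
    have hGA : HasDerivAt (fun u : ℝ => gpdf (gquant (1 - u))) (gquant (1 - x)) x := by
      have := (pdf_quant_hasDerivAt hx2).comp x h1
      refine this.congr_deriv ?_
      ring
    -- derivative of the inner linear map for B
    have hu : HasDerivAt (fun u : ℝ => (α - pA * u) / (1 - pA)) (-pA / (1 - pA)) x := by
      have h2 : HasDerivAt (fun u : ℝ => α - pA * u) (-pA) x := by
        have := ((hasDerivAt_id x).const_mul pA).const_sub α
        simpa using this
      exact h2.div_const (1 - pA)
    have hGB : HasDerivAt (fun u : ℝ => gpdf (gquant (1 - (α - pA * u) / (1 - pA))))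
        (qB * (-pA / (1 - pA))) x := by
      have h3 : HasDerivAt (fun v : ℝ => gpdf (gquant (1 - v))) qB y := by
        have := (pdf_quant_hasDerivAt hy2).comp y ((hasDerivAt_id y).const_sub 1)
        refine this.congr_deriv ?_
        simp only [hqB]; ring
      exact h3.comp x hu
    have hA : HasDerivAt (fun u : ℝ => μA * u + sA * gpdf (gquant (1 - u)))
        (μA + sA * qA) x := by
      have := ((hasDerivAt_id x).const_mul μA).add (hGA.const_mul sA)
      exact this.congr_deriv (by simp only [hqA]; ring)
    have hB : HasDerivAt (fun u : ℝ => μB * ((α - pA * u) / (1 - pA))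
          + sB * gpdf (gquant (1 - (α - pA * u) / (1 - pA))))
        (μB * (-pA / (1 - pA)) + sB * (qB * (-pA / (1 - pA)))) x :=
      (hu.const_mul μB).add (hGB.const_mul sB)
    have hQ : HasDerivAt (Qfun pA α μA μB sA sB)
        ((1 / α) * (pA * (μA + sA * qA)
          + (1 - pA) * (μB * (-pA / (1 - pA)) + sB * (qB * (-pA / (1 - pA)))))) x := by
      have := ((hA.const_mul pA).add (hB.const_mul (1 - pA))).const_mul (1 / α)
      exact this
    convert hQ using 1
    rw [bracket_eq μA βA qA ηA σA hηA hσA, bracket_eq μB βB qB ηB σB hηB hσB]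
    have hα0 : (0:ℝ) < α := hα.1
    field_simp
    ring
  exact ⟨fun x hx => ((key x hx).differentiableAt).differentiableWithinAt, key⟩
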